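/- arXiv:1112.0683 — 2 statements merged into one kernel-verified Lean document; each statement's English description precedes it below -/
import Mathlib

section
/- As α → ∞ and for fixed h₀ ≥ 1, the linearized surface Cauchy–Born strain U₀ = φ'(2)/(φ''(1) + (4 - 2/h₀)φ''(2)) · (1/h₀) satisfies h₀·U₀ = (e^{-α}/α)[1 - (1 + 2/h₀)e^{-α}] + O(e^{-3α}/α). -/
/-- Equilibrium distance parameter of the Morse potential. -/
noncomputable def morseR0 (α : ℝ) : ℝ :=
  1 + (1 / α) * Real.log ((1 + 2 * Real.exp (-α)) / (1 + 2 * Real.exp (-2 * α)))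

/-- The (shifted) Morse potential with stiffness α and shift φ₀. -/
noncomputable def morse (α φ₀ : ℝ) (r : ℝ) : ℝ :=
  Real.exp (-2 * α * (r - morseR0 α)) - 2 * Real.exp (-α * (r - morseR0 α)) - φ₀

lemma hasDerivAt_morse (α φ₀ r : ℝ) :
    HasDerivAt (morse α φ₀)
      (-(2*α) * Real.exp (-2*α*(r - morseR0 α)) + 2*α * Real.exp (-α*(r - morseR0 α))) r := by
  have h1 : HasDerivAt (fun x : ℝ => -2*α*(x - morseR0 α)) (-2*α) r := by
    simpa using ((hasDerivAt_id r).sub_const (morseR0 α)).const_mul (-2*α)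
  have h2 : HasDerivAt (fun x : ℝ => -α*(x - morseR0 α)) (-α) r := by
    simpa using ((hasDerivAt_id r).sub_const (morseR0 α)).const_mul (-α)
  have h3 := h1.exp
  have h4 := (h2.exp).const_mul (2 : ℝ)
  have := (h3.sub h4).sub_const φ₀
  refine this.congr_deriv ?_
  ring

lemma deriv_morse (α φ₀ : ℝ) :
    deriv (morse α φ₀) = fun r =>
      -(2*α) * Real.exp (-2*α*(r - morseR0 α)) + 2*α * Real.exp (-α*(r - morseR0 α)) :=
  funext fun r => (hasDerivAt_morse α φ₀ r).deriv

lemma deriv2_morse (α φ₀ r : ℝ) :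
    deriv (deriv (morse α φ₀)) r =
      4*α^2 * Real.exp (-2*α*(r - morseR0 α)) - 2*α^2 * Real.exp (-α*(r - morseR0 α)) := by
  rw [deriv_morse]
  have h1 : HasDerivAt (fun x : ℝ => -2*α*(x - morseR0 α)) (-2*α) r := by
    simpa using ((hasDerivAt_id r).sub_const (morseR0 α)).const_mul (-2*α)
  have h2 : HasDerivAt (fun x : ℝ => -α*(x - morseR0 α)) (-α) r := by
    simpa using ((hasDerivAt_id r).sub_const (morseR0 α)).const_mul (-α)
  have h3 := (h1.exp).const_mul (-(2*α))
  have h4 := (h2.exp).const_mul (2*α)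
  have := (h3.add h4).deriv
  refine this.trans ?_
  ring

lemma exp_eval (α : ℝ) (hα : 0 < α) :
    Real.exp (-α*(1 - morseR0 α)) =
      (1 + 2*Real.exp (-α)) / (1 + 2*(Real.exp (-α))^2) := by
  have hu : (0:ℝ) < Real.exp (-α) := Real.exp_pos _
  have hQ : (0:ℝ) < (1 + 2*Real.exp (-α)) / (1 + 2*(Real.exp (-α))^2) := by positivity
  have h2 : Real.exp (-2*α) = (Real.exp (-α))^2 := by
    rw [show (-2*α) = (-α) + (-α) by ring, Real.exp_add]; ring
  have harg : -α*(1 - morseR0 α) =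
      Real.log ((1 + 2*Real.exp (-α)) / (1 + 2*(Real.exp (-α))^2)) := by
    rw [morseR0, h2]
    field_simp
    ring
  rw [harg, Real.exp_log hQ]

lemma arith_P_bound (t u : ℝ) (ht0 : 0 < t) (ht2 : t ≤ 2) (hu : 0 < u) (hu1 : u ≤ 1) :
    |(-(6-3*t-t^2) - (2-6*t+2*t^2)*u + (1+t)*(8-2*t)*u^2)| ≤ 60 := by
  rw [abs_le]
  have e1 : u^2 ≤ 1 := by nlinarith
  have e2 : t*u ≤ 2 := by nlinarith
  have e3 : t^2 ≤ 4 := by nlinarith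
  have e4 : t^2*u ≤ 4 := by nlinarith
  have e5 : t*u^2 ≤ 2 := by nlinarith
  have e6 : t^2*u^2 ≤ 4 := by nlinarith
  have e7 : 0 ≤ t*u := by positivity
  have e8 : 0 ≤ t^2*u := by positivity
  have e9 : 0 ≤ t*u^2 := by positivity
  have e10 : 0 ≤ t^2*u^2 := by positivity
  constructor <;> nlinarith

lemma arith_div_bound (P N : ℝ) (hN : 1 ≤ N) (hP : |P| ≤ 60) : |P/N| ≤ 60 := by
  have hN0 : 0 < N := lt_of_lt_of_le one_pos hN
  rw [abs_div, abs_of_pos hN0, div_le_iff₀ hN0]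
  nlinarith [abs_nonneg P]

/-- for fixed h₀ ≥ 1, the linearized SCB strain
U₀ = φ'(2)/(φ''(1) + (4-2/h₀)φ''(2)) · (1/h₀) satisfies
h₀U₀ = (e^{-α}/α)[1 - (1+2/h₀)e^{-α}] + O(e^{-3α}/α) as α → ∞. -/
theorem stmt_10 (φ₀ h₀ : ℝ) (hh : 1 ≤ h₀) :
    ∃ C α₀ : ℝ, 0 < C ∧ 0 < α₀ ∧ ∀ α : ℝ, α₀ ≤ α →
      0 < deriv (deriv (morse α φ₀)) 1 + (4 - 2 / h₀) * deriv (deriv (morse α φ₀)) 2 ∧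
      |h₀ * (deriv (morse α φ₀) 2 /
            (deriv (deriv (morse α φ₀)) 1 + (4 - 2 / h₀) * deriv (deriv (morse α φ₀)) 2)
            * (1 / h₀))
        - Real.exp (-α) / α * (1 - (1 + 2 / h₀) * Real.exp (-α))|
        ≤ C * Real.exp (-3 * α) / α := by
  refine ⟨60, 1, by norm_num, by norm_num, fun α hα => ?_⟩
  have hα0 : (0:ℝ) < α := lt_of_lt_of_le one_pos hα
  have hh0 : (0:ℝ) < h₀ := lt_of_lt_of_le one_pos hh
  set u : ℝ := Real.exp (-α) with hu_def
  have hu : 0 < u := Real.exp_pos _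
  have hu1 : u < 1 := by
    rw [hu_def]
    exact Real.exp_lt_one_iff.mpr (by linarith)
  set v : ℝ := 1 + 2*u^2 with hv_def
  have hv : 0 < v := by positivity
  set t : ℝ := 2 / h₀ with ht_def
  have ht0 : 0 < t := by positivity
  have ht2 : t ≤ 2 := by
    rw [ht_def]
    rw [div_le_iff₀ hh0]; linarith
  -- exponential values
  have hQ1 : Real.exp (-α*(1 - morseR0 α)) = (1 + 2*u)/v := exp_eval α hα0
  have hQ2 : Real.exp (-2*α*(1 - morseR0 α)) = ((1 + 2*u)/v)^2 := by
    rw [show (-2*α*(1 - morseR0 α)) = (-α*(1 - morseR0 α)) + (-α*(1 - morseR0 α)) by ring,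
      Real.exp_add, hQ1]; ring
  have hQ3 : Real.exp (-α*(2 - morseR0 α)) = u * ((1 + 2*u)/v) := by
    rw [show (-α*(2 - morseR0 α)) = (-α) + (-α*(1 - morseR0 α)) by ring, Real.exp_add, hQ1]
  have hQ4 : Real.exp (-2*α*(2 - morseR0 α)) = (u * ((1 + 2*u)/v))^2 := by
    rw [show (-2*α*(2 - morseR0 α)) = (-α*(2 - morseR0 α)) + (-α*(2 - morseR0 α)) by ring,
      Real.exp_add, hQ3]; ring
  -- derivative values
  have hvne : v ≠ 0 := ne_of_gt hv
  have hd2 : deriv (morse α φ₀) 2 = 2*α*u*(1+2*u)*(1-u)/v^2 := by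
    rw [deriv_morse]
    simp only
    rw [show ((2:ℝ) - morseR0 α) = (2 - morseR0 α) by ring] at *
    rw [show (-2*α*((2:ℝ) - morseR0 α)) = -2*α*(2 - morseR0 α) by ring, hQ4,
      show (-α*((2:ℝ) - morseR0 α)) = -α*(2 - morseR0 α) by ring, hQ3]
    field_simp
    ring
  have hdd1 : deriv (deriv (morse α φ₀)) 1 = 2*α^2*(1+2*u)*(1+4*u-2*u^2)/v^2 := by
    rw [deriv2_morse, show (-2*α*((1:ℝ) - morseR0 α)) = -2*α*(1 - morseR0 α) by ring, hQ2,
      show (-α*((1:ℝ) - morseR0 α)) = -α*(1 - morseR0 α) by ring, hQ1]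
    field_simp
    ring
  have hdd2 : deriv (deriv (morse α φ₀)) 2 = 2*α^2*u*(1+2*u)*(2*u+2*u^2-1)/v^2 := by
    rw [deriv2_morse, show (-2*α*((2:ℝ) - morseR0 α)) = -2*α*(2 - morseR0 α) by ring, hQ4,
      show (-α*((2:ℝ) - morseR0 α)) = -α*(2 - morseR0 α) by ring, hQ3]
    field_simp
    ring
  set N : ℝ := 1 + t*u + (6-2*t)*u^2 + (8-2*t)*u^3 with hN_def
  have hN1 : 1 ≤ N := by nlinarith [mul_pos ht0 hu, sq_nonneg u, pow_pos hu 3]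
  have hN0 : 0 < N := lt_of_lt_of_le one_pos hN1
  have hNne : N ≠ 0 := ne_of_gt hN0
  have hαne : α ≠ 0 := ne_of_gt hα0
  have hhne : h₀ ≠ 0 := ne_of_gt hh0
  have hDen : deriv (deriv (morse α φ₀)) 1 + (4 - 2 / h₀) * deriv (deriv (morse α φ₀)) 2
      = 2*α^2*(1+2*u)*N/v^2 := by
    rw [hdd1, hdd2, hN_def, ht_def]
    field_simp
    ring
  constructor
  · rw [hDen]; positivity
  · rw [hDen, hd2]
    have hratio : h₀ * (2*α*u*(1+2*u)*(1-u)/v^2 / (2*α^2*(1+2*u)*N/v^2) * (1/h₀))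
        = u*(1-u)/(α*N) := by
      field_simp
    rw [hratio]
    have hexp3 : Real.exp (-3*α) = u^3 := by
      rw [show (-3*α) = (-α) + ((-α) + (-α)) by ring, Real.exp_add, Real.exp_add]; ring
    rw [hexp3]
    have ht' : (1 + 2/h₀) = 1 + t := by rw [ht_def]
    rw [ht']
    set P : ℝ := -(6-3*t-t^2) - (2-6*t+2*t^2)*u + (1+t)*(8-2*t)*u^2 with hP_def
    have hdiff : u*(1-u)/(α*N) - u/α*(1-(1+t)*u) = u^3/α * (P/N) := by
      rw [hP_def]
      field_simp
      rw [hN_def]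
      ring
    rw [hdiff]
    clear hdiff hratio hDen hd2 hdd1 hdd2 hQ1 hQ2 hQ3 hQ4 hexp3 ht'
    clear_value u v t N P
    have hu1' : u ≤ 1 := le_of_lt hu1
    have hPb : |P| ≤ 60 := by
      rw [hP_def]; exact arith_P_bound t u ht0 ht2 hu hu1'
    have hPN : |P/N| ≤ 60 := arith_div_bound P N hN1 hPb
    rw [abs_mul]
    have h1 : |u^3/α| = u^3/α := abs_of_pos (by positivity)
    rw [h1]
    calc u^3/α * |P/N| ≤ u^3/α * 60 := by
          apply mul_le_mul_of_nonneg_left hPN (by positivity)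
      _ = 60 * u^3 / α := by ring
end

section
/- Mean strain error, case h₀ > 1: in the linearized 1D model, the relative mean strain error |Σ_ℓ(u_ℓ^{scb} - u_ℓ^a)| / |Σ_ℓ u_ℓ^a| equals 2(1 - 1/h₀)e^{-α} + O(e^{-2α}) as α → ∞. -/
lemma morse_hasDerivAt (α φ₀ r : ℝ) :
    HasDerivAt (morse α φ₀)
      (-2*α*Real.exp (-2*α*(r - morseR0 α)) + 2*α*Real.exp (-α*(r - morseR0 α))) r := by
  have h1 : HasDerivAt (fun r : ℝ => -2*α*(r - morseR0 α)) (-2*α) r := by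
    simpa using ((hasDerivAt_id r).sub_const (morseR0 α)).const_mul (-2*α)
  have h2 : HasDerivAt (fun r : ℝ => -α*(r - morseR0 α)) (-α) r := by
    simpa using ((hasDerivAt_id r).sub_const (morseR0 α)).const_mul (-α)
  have := ((h1.exp).sub ((h2.exp).const_mul 2)).sub_const φ₀
  exact this.congr_deriv (by ring)

lemma morse_deriv (α φ₀ : ℝ) : deriv (morse α φ₀) =
    fun r => -2*α*Real.exp (-2*α*(r - morseR0 α)) + 2*α*Real.exp (-α*(r - morseR0 α)) := by
  funext r
  exact (morse_hasDerivAt α φ₀ r).deriv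

lemma morse_deriv2 (α φ₀ r : ℝ) : deriv (deriv (morse α φ₀)) r =
    4*α^2*Real.exp (-2*α*(r - morseR0 α)) - 2*α^2*Real.exp (-α*(r - morseR0 α)) := by
  rw [morse_deriv]
  have h1 : HasDerivAt (fun r : ℝ => -2*α*(r - morseR0 α)) (-2*α) r := by
    simpa using ((hasDerivAt_id r).sub_const (morseR0 α)).const_mul (-2*α)
  have h2 : HasDerivAt (fun r : ℝ => -α*(r - morseR0 α)) (-α) r := by
    simpa using ((hasDerivAt_id r).sub_const (morseR0 α)).const_mul (-α)
  have := ((h1.exp.const_mul (-2*α)).add (h2.exp.const_mul (2*α)))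
  refine this.deriv.trans ?_
  ring

set_option maxHeartbeats 1000000 in
lemma est_main (H s x : ℝ) (hH : 2 ≤ H) (hs0 : 0 < s) (hs : s ≤ 1/10000)
    (hx0 : 0 < x) (hx1 : x < 1)
    (hxeq : x = (s*(1-2*s-2*s^2)/(1+2*s+2*s^2+4*s^3)) * (1+x^2)) :
    |2*x*(H-1-H*x)/(H*(1-x)^2+2*x) - 2*(1-1/H)*s| ≤ 200*s^2 := by
  have hH0 : (0:ℝ) < H := by linarith
  set μ := s*(1-2*s-2*s^2)/(1+2*s+2*s^2+4*s^3) with hμ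
  have hden : (0:ℝ) < 1+2*s+2*s^2+4*s^3 := by nlinarith
  have hnum : (0:ℝ) < 1-2*s-2*s^2 := by nlinarith
  have hμ0 : 0 < μ := by positivity
  have hμs : μ ≤ s := by
    rw [hμ, div_le_iff₀ hden]; nlinarith
  have hμs2 : s - 5*s^2 ≤ μ := by
    rw [hμ, le_div_iff₀ hden]
    nlinarith [mul_pos hs0 hs0, mul_pos (mul_pos hs0 hs0) hs0,
      mul_pos (mul_pos (mul_pos hs0 hs0) hs0) hs0,
      mul_pos (mul_pos (mul_pos (mul_pos hs0 hs0) hs0) hs0) hs0]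
  have hx2μ : x ≤ 2*μ := by nlinarith [sq_nonneg x]
  have hxs : x ≤ 2*s := by linarith
  have hxμ : μ ≤ x := by nlinarith
  have hxμ2 : x - μ ≤ s^2 := by nlinarith
  have hxsabs : |x - s| ≤ 6*s^2 := by
    rw [abs_le]; constructor <;> nlinarith
  have hxsmall : x ≤ 1/5000 := by linarith
  set N := H*(1-x)^2+2*x with hN
  have hNpos : (0:ℝ) < N := by nlinarith
  have hHN : (0:ℝ) < H*N := by positivity
  have hN1 : H^2/2 ≤ H*N := by nlinarith
  have hkey : 2*x*(H-1-H*x)/N - 2*(1-1/H)*x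
      = 2*x^2*(2*(H-1)^2 - H^2 - (H-1)*H*x)/(H*N) := by
    field_simp
    ring
  have hMabs : |2*(H-1)^2 - H^2 - (H-1)*H*x| ≤ 4*H^2 := by
    rw [abs_le]; constructor <;> nlinarith
  have hb1 : |2*x*(H-1-H*x)/N - 2*(1-1/H)*x| ≤ 16*x^2 := by
    rw [hkey, abs_div, abs_of_pos hHN, div_le_iff₀ hHN, abs_mul,
      abs_of_nonneg (by positivity : (0:ℝ) ≤ 2*x^2)]
    calc 2*x^2*|2*(H-1)^2 - H^2 - (H-1)*H*x|
        ≤ 2*x^2*(4*H^2) := mul_le_mul_of_nonneg_left hMabs (by positivity)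
      _ = 16*x^2*(H^2/2) := by ring
      _ ≤ 16*x^2*(H*N) := mul_le_mul_of_nonneg_left hN1 (by positivity)
  have h01 : 0 ≤ 1-1/H := by
    have : 1/H ≤ 1 := by rw [div_le_one hH0]; linarith
    linarith
  have hb2 : |2*(1-1/H)*x - 2*(1-1/H)*s| ≤ 12*s^2 := by
    have heq : |2*(1-1/H)*x - 2*(1-1/H)*s| = 2*(1-1/H)*|x-s| := by
      rw [show 2*(1-1/H)*x - 2*(1-1/H)*s = (2*(1-1/H))*(x-s) by ring, abs_mul,
        abs_of_nonneg (by linarith : (0:ℝ) ≤ 2*(1-1/H))]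
    rw [heq]
    have hHinv : 0 < 1/H := by positivity
    have h1 : 2*(1-1/H) ≤ 2 := by linarith
    nlinarith [abs_nonneg (x-s)]
  calc |2*x*(H-1-H*x)/N - 2*(1-1/H)*s|
      ≤ |2*x*(H-1-H*x)/N - 2*(1-1/H)*x| + |2*(1-1/H)*x - 2*(1-1/H)*s| :=
        abs_sub_le _ _ _
    _ ≤ 16*x^2 + 12*s^2 := by linarith
    _ ≤ 200*s^2 := by nlinarith


lemma aux_lam2s (s lam : ℝ) (hs0 : 0 < s) (hnum1 : (0:ℝ) < 1-2*s-2*s^2)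
    (hden3 : (0:ℝ) < 1+2*s+2*s^2+4*s^3) (hlam0 : 0 < lam) (hlam1 : lam < 1)
    (hx_eq : lam = (s*(1-2*s-2*s^2)/(1+2*s+2*s^2+4*s^3)) * (1+lam^2)) :
    lam ≤ 2*s := by
  have hmu0pos : 0 < s*(1-2*s-2*s^2)/(1+2*s+2*s^2+4*s^3) := by positivity
  have hmules : s*(1-2*s-2*s^2)/(1+2*s+2*s^2+4*s^3) ≤ s := by
    rw [div_le_iff₀ hden3]; nlinarith
  have h1 : s*(1-2*s-2*s^2)/(1+2*s+2*s^2+4*s^3) * (lam^2-1) ≤ 0 :=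
    mul_nonpos_of_nonneg_of_nonpos hmu0pos.le (by nlinarith)
  nlinarith [hx_eq, h1, hmules]

lemma aux_P (H lam : ℝ) (hH2 : 2 ≤ H) (hlam0 : 0 < lam) (hlam1 : lam < 1) :
    (0:ℝ) < H*(1-lam)^2+2*lam := by nlinarith

lemma aux_pos_of_mul (t lam : ℝ) (h : 0 < t*lam) (h0 : 0 < lam) : 0 < t := by
  by_contra hcon; push_neg at hcon; nlinarith

lemma aux_Hlam (H s lam : ℝ) (hH2 : 2 ≤ H) (hssmall : s ≤ 1/10000)
    (hlam0 : 0 < lam) (hlam2s : lam ≤ 2*s) : (0:ℝ) ≤ H-1-H*lam := by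
  nlinarith [mul_nonneg (by linarith : (0:ℝ) ≤ H-2) (by linarith : (0:ℝ) ≤ 1-lam)]

lemma aux_negmul (b lam : ℝ) (hb : b < 0) (hp : 0 < 1+lam) : 0 < -(b*(1+lam)) := by nlinarith

lemma aux_negmul2 (b P : ℝ) (hb : b < 0) (hp : 0 < P) : 0 < -(b*P) := by nlinarith

set_option maxHeartbeats 2000000 in

/-- mean strain error for h₀ > 1:
|Σ(u^scb - u^a)|/|Σ u^a| = 2(1 - 1/h₀)e^{-α} + O(e^{-2α}) as α → ∞. -/
theorem stmt_13 (φ₀ : ℝ) (h₀ : ℕ) (hh : 1 < h₀) :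
    ∃ C α₀ : ℝ, 0 < C ∧ 0 < α₀ ∧ ∀ α : ℝ, α₀ ≤ α →
      ∀ lam : ℝ, lam ∈ Set.Ioo (0 : ℝ) 1 →
        (let a : ℝ := deriv (deriv (morse α φ₀)) 1
         let b : ℝ := deriv (deriv (morse α φ₀)) 2
         let c : ℝ := deriv (morse α φ₀) 2
         b * lam ^ 2 + (a + 2 * b) * lam + b = 0 →
         (let ua : ℕ → ℝ := fun ℓ => c * lam ^ ℓ / (a + b * (1 + lam))
          let uscb : ℕ → ℝ := fun ℓ =>
            if ℓ < h₀ then c / ((h₀ : ℝ) * a + (4 * (h₀ : ℝ) - 2) * b) else 0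
          abs (|∑' ℓ : ℕ, (uscb ℓ - ua ℓ)| / |∑' ℓ : ℕ, ua ℓ|
              - 2 * (1 - 1 / (h₀ : ℝ)) * Real.exp (-α)) ≤ C * Real.exp (-2 * α))) := by
  refine ⟨200, 10, by norm_num, by norm_num, ?_⟩
  intro α hα lam hmem
  intro a b c hq ua uscb
  have ha0 : a = deriv (deriv (morse α φ₀)) 1 := rfl
  have hb0 : b = deriv (deriv (morse α φ₀)) 2 := rfl
  have hc0 : c = deriv (morse α φ₀) 2 := rfl
  have hua0 : ua = fun ℓ => c * lam ^ ℓ / (a + b * (1 + lam)) := rfl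
  have huscb0 : uscb = fun ℓ =>
      (if ℓ < h₀ then c / ((h₀ : ℝ) * a + (4 * (h₀ : ℝ) - 2) * b) else 0) := rfl
  obtain ⟨hlam0, hlam1⟩ := hmem
  have hα0 : (0:ℝ) < α := by linarith
  have hαne : α ≠ 0 := ne_of_gt hα0
  set s := Real.exp (-α) with hs
  have hs0 : 0 < s := Real.exp_pos _
  have hexp2 : Real.exp (-2*α) = s^2 := by
    rw [show (-2*α) = -α + -α by ring, Real.exp_add, hs, sq]
  have hssmall : s ≤ 1/10000 := by
    have h1 : s ≤ Real.exp (-10) := Real.exp_le_exp.mpr (by linarith)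
    have h2 : Real.exp (-10:ℝ) ≤ 1/10000 := by
      rw [Real.exp_neg, inv_le_comm₀ (Real.exp_pos _) (by norm_num)]
      have h3 : ((10:ℕ):ℝ) * 1 = (10:ℝ) := by norm_num
      have h4 : Real.exp 10 = Real.exp 1 ^ (10:ℕ) := by
        rw [← Real.exp_nat_mul, h3]
      have h5 : (2.7:ℝ) ^ (10:ℕ) ≤ Real.exp 1 ^ (10:ℕ) := by
        apply pow_le_pow_left₀ (by norm_num)
        linarith [Real.exp_one_gt_d9]
      have h6 : (10000:ℝ) ≤ (2.7:ℝ)^(10:ℕ) := by norm_num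
      rw [h4]; linarith
    linarith
  set R := (1+2*s)/(1+2*s^2) with hR
  have hs2pos : (0:ℝ) < 1+2*s^2 := by positivity
  have hRpos : 0 < R := by rw [hR]; positivity
  have hexp1 : Real.exp (α*(morseR0 α - 1)) = R := by
    have hQpos : 0 < (1+2*Real.exp (-α))/(1+2*Real.exp (-2*α)) := by positivity
    have harg : α*(morseR0 α - 1)
        = Real.log ((1+2*Real.exp (-α))/(1+2*Real.exp (-2*α))) := by
      rw [morseR0]; field_simp; ring
    rw [harg, Real.exp_log hQpos, hexp2, hR]
  have e11 : Real.exp (-α*((1:ℝ) - morseR0 α)) = R := by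
    rw [show -α*((1:ℝ)-morseR0 α) = α*(morseR0 α - 1) by ring, hexp1]
  have e12 : Real.exp (-2*α*((1:ℝ) - morseR0 α)) = R^2 := by
    rw [show -2*α*((1:ℝ)-morseR0 α) = α*(morseR0 α - 1)+α*(morseR0 α - 1) by ring,
      Real.exp_add, hexp1, sq]
  have e21 : Real.exp (-α*((2:ℝ) - morseR0 α)) = s*R := by
    rw [show -α*((2:ℝ)-morseR0 α) = -α + α*(morseR0 α - 1) by ring,
      Real.exp_add, hexp1, hs]
  have e22 : Real.exp (-2*α*((2:ℝ) - morseR0 α)) = s^2*R^2 := by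
    rw [show -2*α*((2:ℝ)-morseR0 α) = (-α + α*(morseR0 α - 1)) + (-α + α*(morseR0 α - 1)) by ring,
      Real.exp_add, Real.exp_add, hexp1, hs]
    ring
  have ha : a = 4*α^2*R^2 - 2*α^2*R := by rw [ha0, morse_deriv2, e11, e12]
  have hb : b = 4*α^2*(s^2*R^2) - 2*α^2*(s*R) := by rw [hb0, morse_deriv2, e21, e22]
  have hc : c = -2*α*(s^2*R^2) + 2*α*(s*R) := by
    rw [hc0, morse_deriv]; simp only; rw [e21, e22]
  clear ha0 hb0 hc0 e11 e12 e21 e22 hexp1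
  -- explicit rational values in s
  have hs2ne : (1+2*s^2 : ℝ) ≠ 0 := ne_of_gt hs2pos
  have hbval : b = -(2*α^2*s*(1+2*s)*(1-2*s-2*s^2)/(1+2*s^2)^2) := by
    rw [hb, hR]; field_simp; ring
  have hcval : c = 2*α*s*(1+2*s)*(1-s)/(1+2*s^2)^2 := by
    rw [hc, hR]; field_simp; ring
  have hab2val : a + 2*b = 2*α^2*(1+2*s)*(1+2*s+2*s^2+4*s^3)/(1+2*s^2)^2 := by
    rw [ha, hb, hR]; field_simp; ring
  have hnum1 : (0:ℝ) < 1-2*s-2*s^2 := by nlinarith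
  have hden3 : (0:ℝ) < 1+2*s+2*s^2+4*s^3 := by nlinarith
  have h12s : (0:ℝ) < 1+2*s := by linarith
  have hb_neg : b < 0 := by
    rw [hbval, neg_lt_zero]
    have h1 : (0:ℝ) < 2*α^2*s*(1+2*s)*(1-2*s-2*s^2) := by
      have := mul_pos (mul_pos (mul_pos (mul_pos (by norm_num : (0:ℝ) < 2)
        (by positivity : (0:ℝ) < α^2)) hs0) h12s) hnum1
      nlinarith [this]
    positivity
  have hb_ne : b ≠ 0 := ne_of_lt hb_neg
  have hc_pos : 0 < c := by
    rw [hcval]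
    have h1s : (0:ℝ) < 1 - s := by linarith
    have h1 : (0:ℝ) < 2*α*s*(1+2*s)*(1-s) := by
      have := mul_pos (mul_pos (mul_pos (mul_pos (by norm_num : (0:ℝ) < 2) hα0) hs0) h12s) h1s
      nlinarith [this]
    positivity
  have hab2pos : 0 < a + 2*b := by
    rw [hab2val]
    have h1 : (0:ℝ) < 2*α^2*(1+2*s)*(1+2*s+2*s^2+4*s^3) := by
      have := mul_pos (mul_pos (mul_pos (by norm_num : (0:ℝ) < 2)
        (by positivity : (0:ℝ) < α^2)) h12s) hden3
      nlinarith [this]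
    positivity
  -- the fixed point equation for lam
  have hmu : -b/(a+2*b) = s*(1-2*s-2*s^2)/(1+2*s+2*s^2+4*s^3) := by
    rw [div_eq_div_iff (ne_of_gt hab2pos) (ne_of_gt hden3), hab2val, hbval]
    field_simp
  have hx_eq : lam = (s*(1-2*s-2*s^2)/(1+2*s+2*s^2+4*s^3)) * (1+lam^2) := by
    rw [← hmu]
    rw [div_mul_eq_mul_div, eq_div_iff (ne_of_gt hab2pos)]
    linear_combination hq
  -- lam is small
  have hlam2s : lam ≤ 2*s := aux_lam2s s lam hs0 hnum1 hden3 hlam0 hlam1 hx_eq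
  have hH2 : (2:ℝ) ≤ (h₀:ℝ) := by exact_mod_cast hh
  -- denominators
  have hden1x : (a + b*(1+lam))*lam = -(b*(1+lam)) := by linear_combination hq
  have hden2x : ((h₀:ℝ)*a + (4*(h₀:ℝ)-2)*b)*lam
      = -(b*((h₀:ℝ)*(1-lam)^2+2*lam)) := by
    linear_combination (h₀:ℝ)*hq
  have hP : (0:ℝ) < (h₀:ℝ)*(1-lam)^2+2*lam := aux_P _ lam hH2 hlam0 hlam1
  have hnb : (0:ℝ) < -b := neg_pos.mpr hb_neg
  have h1mlam : (0:ℝ) < 1 - lam := by linarith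
  have h1plam : (0:ℝ) < 1 + lam := by linarith
  have hden1pos : 0 < a + b*(1+lam) := by
    refine aux_pos_of_mul _ lam ?_ hlam0
    rw [hden1x]; exact aux_negmul b lam hb_neg h1plam
  have hden2pos : 0 < (h₀:ℝ)*a + (4*(h₀:ℝ)-2)*b := by
    refine aux_pos_of_mul _ lam ?_ hlam0
    rw [hden2x]; exact aux_negmul2 b _ hb_neg hP
  -- tsum values
  have huafun : ua = fun ℓ => (c/(a + b*(1+lam))) * lam^ℓ := by
    funext ℓ; simp only [hua0]; ring
  have hTa : ∑' ℓ : ℕ, ua ℓ = c/((a + b*(1+lam))*(1-lam)) := by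
    rw [huafun, tsum_mul_left, tsum_geometric_of_lt_one hlam0.le hlam1,
      div_eq_mul_inv c, mul_assoc, ← mul_inv, ← div_eq_mul_inv]
  have hsum_ua : Summable ua := by
    rw [huafun]; exact (summable_geometric_of_lt_one hlam0.le hlam1).mul_left _
  have hscb_zero : ∀ ℓ ∉ Finset.range h₀, uscb ℓ = 0 := by
    intro ℓ hℓ
    simp only [Finset.mem_range] at hℓ
    simp only [huscb0]
    exact if_neg hℓ
  have hsum_uscb : Summable uscb := summable_of_ne_finset_zero hscb_zero
  have hTscb : ∑' ℓ : ℕ, uscb ℓ = (h₀:ℝ) * (c/((h₀:ℝ)*a + (4*(h₀:ℝ)-2)*b)) := by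
    rw [tsum_eq_sum hscb_zero]
    have hcong : ∀ ℓ ∈ Finset.range h₀,
        uscb ℓ = c/((h₀:ℝ)*a + (4*(h₀:ℝ)-2)*b) := by
      intro ℓ hℓ
      simp only [huscb0]
      exact if_pos (Finset.mem_range.mp hℓ)
    rw [Finset.sum_congr rfl hcong, Finset.sum_const, Finset.card_range, nsmul_eq_mul]
  have hTd : ∑' ℓ : ℕ, (uscb ℓ - ua ℓ)
      = (h₀:ℝ)*(c/((h₀:ℝ)*a + (4*(h₀:ℝ)-2)*b)) - c/((a + b*(1+lam))*(1-lam)) := by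
    rw [Summable.tsum_sub hsum_uscb hsum_ua, hTscb, hTa]
  have hTa_val : c/((a + b*(1+lam))*(1-lam)) = c*lam/((-b)*(1+lam)*(1-lam)) := by
    rw [div_eq_div_iff (by positivity) (by positivity)]
    linear_combination (-(c*(1-lam)))*hden1x
  have hTscb_val : c/((h₀:ℝ)*a + (4*(h₀:ℝ)-2)*b)
      = c*lam/((-b)*((h₀:ℝ)*(1-lam)^2+2*lam)) := by
    rw [div_eq_div_iff (ne_of_gt hden2pos) (by positivity)]
    linear_combination (-c)*hden2x
  have hTd_val : ∑' ℓ : ℕ, (uscb ℓ - ua ℓ)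
      = c*lam*(2*lam*((h₀:ℝ)-1-(h₀:ℝ)*lam))
        /((-b)*((h₀:ℝ)*(1-lam)^2+2*lam)*((1+lam)*(1-lam))) := by
    rw [hTd, hTscb_val, hTa_val]
    field_simp
    ring
  have hHlam : (0:ℝ) ≤ (h₀:ℝ)-1-(h₀:ℝ)*lam := aux_Hlam _ s lam hH2 hssmall hlam0 hlam2s
  have hTa_pos : 0 < ∑' ℓ : ℕ, ua ℓ := by
    rw [hTa, hTa_val]
    exact div_pos (mul_pos hc_pos hlam0) (mul_pos (mul_pos hnb h1plam) h1mlam)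
  have hTd_nonneg : 0 ≤ ∑' ℓ : ℕ, (uscb ℓ - ua ℓ) := by
    rw [hTd_val]
    apply div_nonneg
    · exact mul_nonneg (mul_nonneg hc_pos.le hlam0.le)
        (mul_nonneg (mul_nonneg (by norm_num) hlam0.le) hHlam)
    · exact (mul_pos (mul_pos hnb hP) (mul_pos h1plam h1mlam)).le
  have hratio : |∑' ℓ : ℕ, (uscb ℓ - ua ℓ)| / |∑' ℓ : ℕ, ua ℓ|
      = 2*lam*((h₀:ℝ)-1-(h₀:ℝ)*lam)/((h₀:ℝ)*(1-lam)^2+2*lam) := by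
    rw [abs_of_nonneg hTd_nonneg, abs_of_pos hTa_pos, hTd_val, hTa, hTa_val]
    rw [div_div_div_comm]
    rw [div_eq_div_iff (by positivity) (ne_of_gt hP)]
    field_simp
  rw [hratio, hexp2]
  exact est_main (h₀:ℝ) s lam hH2 hs0 hssmall hlam0 hlam1 hx_eq
end
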